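/- For any n ≥ 2 and any n₁ ≤ n, there exists a preference profile with n voters and m = n! issues such that on every issue exactly n₁ voters prefer alternative 1, and every pair of distinct voters is at Hamming distance exactly 2p(1−p)·m/(1 − 1/n), where p = n₁/n. -/

import Mathlib

open Finset BigOperators

noncomputable section

/-- Hamming distance between two preference vectors over `m` binary issues. -/
def hamming {m : ℕ} (x y : Fin m → Bool) : ℕ :=
  (Finset.univ.filter fun j => x j ≠ y j).card

/-- Social cost of outcome `z` on profile `X`: sum of Hamming distances. -/
def SC {n m : ℕ} (X : Fin n → Fin m → Bool) (z : Fin m → Bool) : ℕ :=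
  ∑ i, hamming (X i) z

/-- Optimal (minimal) social cost over all outcomes. -/
def optCost {n m : ℕ} (X : Fin n → Fin m → Bool) : ℕ :=
  Finset.univ.inf' Finset.univ_nonempty fun z : Fin m → Bool => SC X z

/-- Number of voters preferring alternative 1 (`true`) on issue `j`. -/
def trueCount {n m : ℕ} (X : Fin n → Fin m → Bool) (j : Fin m) : ℕ :=
  (Finset.univ.filter fun i => X i j = true).card

/-- Number of voters preferring alternative 0 (`false`) on issue `j`. -/
def falseCount {n m : ℕ} (X : Fin n → Fin m → Bool) (j : Fin m) : ℕ :=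
  (Finset.univ.filter fun i => X i j = false).card

/-- Expected social cost of `k`-sortition: a uniformly random committee of size `k`
decides each issue by simple majority, ties broken uniformly at random. -/
def sortitionCost (k : ℕ) {n m : ℕ} (X : Fin n → Fin m → Bool) : ℝ :=
  (∑ C ∈ Finset.powersetCard k (Finset.univ : Finset (Fin n)), ∑ j : Fin m,
      (if k < 2 * (C.filter fun i => X i j = true).card then (falseCount X j : ℝ)
       else if 2 * (C.filter fun i => X i j = true).card < k then (trueCount X j : ℝ)
       else (n : ℝ) / 2)) / (n.choose k : ℝ)

/-- Ratio of an (expected) cost to the optimal cost, with the convention `0/0 = 1`. -/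
def ratio (cost : ℝ) (opt : ℕ) : ℝ := if opt = 0 then 1 else cost / (opt : ℝ)

/-- Worst-case approximation ratio of `k`-sortition over profiles with `n` voters, `m` issues. -/
def sortitionAR (n m k : ℕ) : ℝ :=
  ⨆ X : Fin n → Fin m → Bool, ratio (sortitionCost k X) (optCost X)

/-- The set of committee members of `C` closest (in Hamming distance) to voter `i`. -/
def closestSet {n m : ℕ} (X : Fin n → Fin m → Bool) (C : Finset (Fin n)) (i : Fin n) :
    Finset (Fin n) :=
  C.filter fun c => ∀ c' ∈ C, hamming (X i) (X c) ≤ hamming (X i) (X c')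

/-- Weight of committee member `c`: each voter splits one unit of weight equally among
their closest committee members. -/
def wWeight {n m : ℕ} (X : Fin n → Fin m → Bool) (C : Finset (Fin n)) (c : Fin n) : ℝ :=
  ∑ i : Fin n, if c ∈ closestSet X C i then 1 / ((closestSet X C i).card : ℝ) else 0

/-- Expected social cost of the decision of committee `C` under weighted majority
(per issue, ties broken uniformly). -/
def wCost {n m : ℕ} (X : Fin n → Fin m → Bool) (C : Finset (Fin n)) : ℝ :=
  ∑ j : Fin m,
    (if (∑ c ∈ C.filter (fun c => X c j = false), wWeight X C c)
          < (∑ c ∈ C.filter (fun c => X c j = true), wWeight X C c)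
        then (falseCount X j : ℝ)
     else if (∑ c ∈ C.filter (fun c => X c j = true), wWeight X C c)
          < (∑ c ∈ C.filter (fun c => X c j = false), wWeight X C c)
        then (trueCount X j : ℝ)
     else (n : ℝ) / 2)

/-- Expected social cost of weighted `k`-sortition: uniformly random committee of size `k`,
weighted majority vote per issue. -/
def wSortitionCost (k : ℕ) {n m : ℕ} (X : Fin n → Fin m → Bool) : ℝ :=
  (∑ C ∈ Finset.powersetCard k (Finset.univ : Finset (Fin n)), wCost X C) / (n.choose k : ℝ)

/-- Worst-case approximation ratio of weighted `k`-sortition. -/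
def wSortitionAR (n m k : ℕ) : ℝ :=
  ⨆ X : Fin n → Fin m → Bool, ratio (wSortitionCost k X) (optCost X)



lemma aux_card_lt (n n₁ : ℕ) (hn : 0 < n) (h : n₁ ≤ n) :
    ((univ : Finset (Fin n)).filter fun a : Fin n => (a : ℕ) < n₁).card = n₁ := by
  have : ((univ : Finset (Fin n)).filter fun a : Fin n => (a : ℕ) < n₁).card
      = (Finset.range n₁).card := by
    refine Finset.card_nbij' (fun a => (a : ℕ))
      (fun a => Fin.mk (a % n) (Nat.mod_lt _ hn)) ?_ ?_ ?_ ?_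
    · intro a ha; simp at ha ⊢; exact ha
    · intro a ha; simp at ha ⊢; rwa [Nat.mod_eq_of_lt (by omega)]
    · intro a ha; exact Fin.ext (Nat.mod_eq_of_lt a.isLt)
    · intro a ha; simp at ha ⊢; exact Nat.mod_eq_of_lt (by omega)
  simpa using this

lemma aux_perm_filter (n : ℕ) (σ : Equiv.Perm (Fin n)) (p : Fin n → Prop) [DecidablePred p] :
    ((univ : Finset (Fin n)).filter fun i => p (σ i)).card = (univ.filter p).card := by
  refine Finset.card_nbij' (fun i => σ i) (fun i => σ.symm i) ?_ ?_ ?_ ?_ <;> intro x hx <;> simp_all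


lemma pair_count {α : Type*} [Fintype α] [DecidableEq α] (P : α → Prop) [DecidablePred P] :
    (((univ : Finset α) ×ˢ univ).filter fun p => decide (P p.1) ≠ decide (P p.2)).card
      = 2 * (univ.filter P).card * (univ.filter fun a => ¬ P a).card := by
  set T := (univ : Finset α).filter P with hT
  set S := (univ : Finset α).filter (fun a => ¬ P a) with hS
  have hset : (((univ : Finset α) ×ˢ univ).filter fun p => decide (P p.1) ≠ decide (P p.2))
      = T ×ˢ S ∪ S ×ˢ T := by
    ext ⟨a, b⟩
    simp only [mem_filter, mem_product, mem_union, mem_univ, true_and, Ne,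
      decide_eq_decide, hT, hS]
    tauto
  have hdisj : Disjoint (T ×ˢ S) (S ×ˢ T) := by
    rw [Finset.disjoint_left]
    rintro ⟨a, b⟩ h1 h2
    simp only [mem_product, hT, hS, mem_filter] at h1 h2
    tauto
  rw [hset, Finset.card_union_of_disjoint hdisj, Finset.card_product, Finset.card_product]
  ring

lemma perm_pair_symm (n n₁ : ℕ) (i i' k k' : Fin n) (hii : i ≠ i') (hkk : k ≠ k') :
    ((univ : Finset (Equiv.Perm (Fin n))).filter fun σ =>
        decide (((σ i : Fin n) : ℕ) < n₁) ≠ decide (((σ i' : Fin n) : ℕ) < n₁)).card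
    = ((univ : Finset (Equiv.Perm (Fin n))).filter fun σ =>
        decide (((σ k : Fin n) : ℕ) < n₁) ≠ decide (((σ k' : Fin n) : ℕ) < n₁)).card := by
  classical
  set s1 := Equiv.swap k i with hs1
  have h1 : s1 k' ≠ i := by
    intro h
    have hk : s1 k = i := Equiv.swap_apply_left k i
    exact hkk (s1.injective (hk.trans h.symm))
  set s2 := Equiv.swap (s1 k') i' with hs2
  set τ := s2 * s1 with hτ
  have hτk : τ k = i := by
    have : s1 k = i := Equiv.swap_apply_left k i
    simp only [hτ, Equiv.Perm.mul_apply, this]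
    exact Equiv.swap_apply_of_ne_of_ne (Ne.symm h1) hii
  have hτk' : τ k' = i' := by
    simp only [hτ, Equiv.Perm.mul_apply]
    exact Equiv.swap_apply_left _ _
  refine Finset.card_nbij' (fun σ => σ * τ) (fun σ => σ * τ⁻¹) ?_ ?_ ?_ ?_
  · intro σ hσ
    simp only [mem_filter, mem_univ, true_and] at hσ ⊢
    simpa [Equiv.Perm.mul_apply, hτk, hτk'] using hσ
  · intro σ hσ
    simp only [Finset.mem_coe, mem_filter, mem_univ, true_and] at hσ ⊢
    have e1 : (σ * τ⁻¹) i = σ k := by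
      simp [Equiv.Perm.mul_apply, ← hτk]
    have e2 : (σ * τ⁻¹) i' = σ k' := by
      simp [Equiv.Perm.mul_apply, ← hτk']
    rw [e1, e2]; exact hσ
  · intro σ _; group
  · intro σ _; group


theorem stmt18 (n n₁ : ℕ) (hn : 2 ≤ n) (h₁ : n₁ ≤ n) :
    ∃ X : Fin n → Fin (n.factorial) → Bool,
      (∀ j, trueCount X j = n₁) ∧
      ∀ i i' : Fin n, i ≠ i' →
        (hamming (X i) (X i') : ℝ)
          = 2 * ((n₁ : ℝ) / n) * (1 - (n₁ : ℝ) / n) * (n.factorial : ℝ)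
              / (1 - 1 / (n : ℝ)) := by
  classical
  have hn0 : 0 < n := by omega
  have hcard : Fintype.card (Equiv.Perm (Fin n)) = n.factorial := by
    rw [Fintype.card_perm, Fintype.card_fin]
  let e : Fin n.factorial ≃ Equiv.Perm (Fin n) := (Fintype.equivFinOfCardEq hcard).symm
  refine ⟨fun i j => decide ((((e j) i : Fin n) : ℕ) < n₁), ?_, ?_⟩
  · intro j
    have : trueCount (fun i j => decide ((((e j) i : Fin n) : ℕ) < n₁)) j
        = ((univ : Finset (Fin n)).filter fun i => (((e j) i : Fin n) : ℕ) < n₁).card := by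
      unfold trueCount
      congr 1
      apply Finset.filter_congr
      intro i _
      simp
    rw [this, aux_perm_filter n (e j) (fun a : Fin n => (a : ℕ) < n₁),
      aux_card_lt n n₁ hn0 h₁]
  · intro i i' hii
    set X : Fin n → Fin n.factorial → Bool :=
      fun i j => decide ((((e j) i : Fin n) : ℕ) < n₁) with hX
    set D : ℕ := ((univ : Finset (Equiv.Perm (Fin n))).filter fun σ =>
        decide (((σ i : Fin n) : ℕ) < n₁) ≠ decide (((σ i' : Fin n) : ℕ) < n₁)).card with hD
    have hham : hamming (X i) (X i') = D := by
      unfold hamming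
      refine Finset.card_nbij' (fun j => e j) (fun σ => e.symm σ) ?_ ?_ ?_ ?_
      · intro j hj
        simp only [Finset.mem_coe, mem_filter, mem_univ, true_and, hX] at hj ⊢
        exact hj
      · intro σ hσ
        simp only [mem_filter, mem_univ, true_and, hX] at hσ ⊢
        simpa using hσ
      · intro j _; simp
      · intro σ _; simp
    have hcount : ∀ σ : Equiv.Perm (Fin n),
        (((univ : Finset (Fin n)) ×ˢ univ).filter fun p =>
          decide (((σ p.1 : Fin n) : ℕ) < n₁) ≠ decide (((σ p.2 : Fin n) : ℕ) < n₁)).card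
          = 2 * n₁ * (n - n₁) := by
      intro σ
      rw [pair_count (fun a : Fin n => ((σ a : Fin n) : ℕ) < n₁)]
      have h1 : ((univ : Finset (Fin n)).filter
          fun a => ((σ a : Fin n) : ℕ) < n₁).card = n₁ :=
        (aux_perm_filter n σ (fun a : Fin n => (a : ℕ) < n₁)).trans
          (aux_card_lt n n₁ hn0 h₁)
      have h2 : ((univ : Finset (Fin n)).filter
          fun a => ¬ ((σ a : Fin n) : ℕ) < n₁).card = n - n₁ := by
        have hadd := Finset.card_filter_add_card_filter_not
          (s := (univ : Finset (Fin n))) (p := fun a => ((σ a : Fin n) : ℕ) < n₁)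
        have hu : (univ : Finset (Fin n)).card = n := by simp
        omega
      rw [h1, h2]
    have hmain : (n * n - n) * D = n.factorial * (2 * n₁ * (n - n₁)) := by
      have hswap : ∑ p ∈ ((univ : Finset (Fin n)) ×ˢ univ),
          ((univ : Finset (Equiv.Perm (Fin n))).filter fun σ =>
            decide (((σ p.1 : Fin n) : ℕ) < n₁) ≠ decide (((σ p.2 : Fin n) : ℕ) < n₁)).card
          = ∑ σ : Equiv.Perm (Fin n),
          (((univ : Finset (Fin n)) ×ˢ univ).filter fun p =>
            decide (((σ p.1 : Fin n) : ℕ) < n₁) ≠ decide (((σ p.2 : Fin n) : ℕ) < n₁)).card := by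
        simp_rw [Finset.card_filter]
        exact Finset.sum_comm
      have hrhs : ∑ σ : Equiv.Perm (Fin n),
          (((univ : Finset (Fin n)) ×ˢ univ).filter fun p =>
            decide (((σ p.1 : Fin n) : ℕ) < n₁) ≠ decide (((σ p.2 : Fin n) : ℕ) < n₁)).card
          = n.factorial * (2 * n₁ * (n - n₁)) := by
        rw [Finset.sum_congr rfl fun σ _ => hcount σ, Finset.sum_const, smul_eq_mul,
          Finset.card_univ, hcard]
      have hlhs : ∑ p ∈ ((univ : Finset (Fin n)) ×ˢ univ),
          ((univ : Finset (Equiv.Perm (Fin n))).filter fun σ =>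
            decide (((σ p.1 : Fin n) : ℕ) < n₁) ≠ decide (((σ p.2 : Fin n) : ℕ) < n₁)).card
          = (n * n - n) * D := by
        rw [← Finset.sum_filter_add_sum_filter_not (((univ : Finset (Fin n)) ×ˢ univ))
          (fun p => p.1 ≠ p.2)]
        have hzero : ∑ p ∈ (((univ : Finset (Fin n)) ×ˢ univ).filter fun p => ¬ p.1 ≠ p.2),
            ((univ : Finset (Equiv.Perm (Fin n))).filter fun σ =>
              decide (((σ p.1 : Fin n) : ℕ) < n₁) ≠ decide (((σ p.2 : Fin n) : ℕ) < n₁)).card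
            = 0 := by
          apply Finset.sum_eq_zero
          intro p hp
          simp only [mem_filter, not_not] at hp
          rw [Finset.card_eq_zero, Finset.filter_eq_empty_iff]
          intro σ _
          rw [hp.2]
          simp
        have hconst : ∑ p ∈ (((univ : Finset (Fin n)) ×ˢ univ).filter fun p => p.1 ≠ p.2),
            ((univ : Finset (Equiv.Perm (Fin n))).filter fun σ =>
              decide (((σ p.1 : Fin n) : ℕ) < n₁) ≠ decide (((σ p.2 : Fin n) : ℕ) < n₁)).card
            = (((univ : Finset (Fin n)) ×ˢ univ).filter fun p => p.1 ≠ p.2).card * D := by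
          rw [Finset.sum_congr rfl fun p hp => ?_, Finset.sum_const, smul_eq_mul]
          have hp' : p.1 ≠ p.2 := (Finset.mem_filter.1 hp).2
          exact perm_pair_symm n n₁ p.1 p.2 i i' hp' hii
        have hcard2 : (((univ : Finset (Fin n)) ×ˢ univ).filter fun p => p.1 ≠ p.2).card
            = n * n - n := by
          have : (((univ : Finset (Fin n)) ×ˢ univ).filter fun p => p.1 ≠ p.2)
              = (univ : Finset (Fin n)).offDiag := by
            ext p
            simp [Finset.mem_offDiag]
          rw [this, Finset.offDiag_card]
          simp
        rw [hzero, hconst, hcard2, add_zero]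
      rw [← hlhs, hswap, hrhs]
    rw [hham]
    have hnn : n ≤ n * n := Nat.le_mul_of_pos_left n hn0
    have hcast : ((n : ℝ) * n - n) * (D : ℝ)
        = (n.factorial : ℝ) * (2 * n₁ * ((n : ℝ) - n₁)) := by
      have h'' : (((n * n - n) * D : ℕ) : ℝ)
          = ((n.factorial * (2 * n₁ * (n - n₁)) : ℕ) : ℝ) := by exact_mod_cast hmain
      push_cast [Nat.cast_sub h₁, Nat.cast_sub hnn] at h''
      linarith [h'']
    have hR0 : (n : ℝ) ≠ 0 := by positivity
    have hR1 : (n : ℝ) - 1 ≠ 0 := by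
      have : (2 : ℝ) ≤ n := by exact_mod_cast hn
      linarith
    have hR2 : 1 - 1 / (n : ℝ) ≠ 0 := by
      rw [sub_ne_zero]
      intro h
      have : (n : ℝ) = 1 := by field_simp at h; linarith [h]
      have : (2 : ℝ) ≤ n := by exact_mod_cast hn
      linarith
    field_simp
    nlinarith [hcast, sq_nonneg ((n:ℝ) - 1)]

end
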